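/- For every λ ∈ ℂ with Re λ > 1.5 and every z ∈ X₂ = {|z| > 1} ∪ {∞}, the point A_λ B₂ z satisfies |A_λ B₂ z| ≥ 5/4. (Here one uses that Re(B₂ z) > 1/3 for z ∈ X₂ and then Re(A_λ w) = Re w + Re λ > 1.5 + 1/3.) -/

import Mathlib

open OnePoint

/-- The matrix `A_λ = [[1,λ],[0,1]]` in `SL₂(ℂ)`. -/
def Amat (lam : ℂ) : Matrix.SpecialLinearGroup (Fin 2) ℂ :=
  ⟨!![1, lam; 0, 1], by simp [Matrix.det_fin_two_of]⟩

/-- The matrix `B_μ = [[1,0],[μ,1]]` in `SL₂(ℂ)`. -/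
def Bmat (mu : ℂ) : Matrix.SpecialLinearGroup (Fin 2) ℂ :=
  ⟨!![1, 0; mu, 1], by simp [Matrix.det_fin_two_of]⟩

/-- The action of `SL₂(ℂ)` on the extended complex plane `ℂ ∪ {∞}`
by Möbius transformations. -/
noncomputable def moebius (g : Matrix.SpecialLinearGroup (Fin 2) ℂ) (z : OnePoint ℂ) : OnePoint ℂ :=
  OnePoint.rec
    (if g.1 1 0 = 0 then ∞ else ((g.1 0 0 / g.1 1 0 : ℂ) : OnePoint ℂ))
    (fun w => if g.1 1 0 * w + g.1 1 1 = 0 then ∞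
      else (((g.1 0 0 * w + g.1 0 1) / (g.1 1 0 * w + g.1 1 1) : ℂ) : OnePoint ℂ)) z

lemma moebius_coe (g : Matrix.SpecialLinearGroup (Fin 2) ℂ) (w : ℂ) :
    moebius g (w : OnePoint ℂ) = if g.1 1 0 * w + g.1 1 1 = 0 then ∞
      else (((g.1 0 0 * w + g.1 0 1) / (g.1 1 0 * w + g.1 1 1) : ℂ) : OnePoint ℂ) := rfl

lemma moebius_infty (g : Matrix.SpecialLinearGroup (Fin 2) ℂ) :
    moebius g ∞ = if g.1 1 0 = 0 then ∞ else ((g.1 0 0 / g.1 1 0 : ℂ) : OnePoint ℂ) := rfl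

lemma re_le_abs' (w : ℂ) : w.re ≤ ‖w‖ := Complex.re_le_norm w


/-- For every `λ ∈ ℂ` with `Re λ > 1.5` and every
`z ∈ X₂ = {|z| > 1} ∪ {∞}`, the point `A_λ B₂ z` satisfies `|A_λ B₂ z| ≥ 5/4`. -/
theorem stmt_7 (lam : ℂ) (hlam : 1.5 < lam.re)
    (z : OnePoint ℂ)
    (hz : z ∈ ((↑) : ℂ → OnePoint ℂ) '' {u : ℂ | 1 < ‖u‖} ∪ {∞}) :
    ∃ u : ℂ, moebius (Amat lam * Bmat 2) z = u ∧ 5 / 4 ≤ ‖u‖ := by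
  have hM : ((Amat lam * Bmat 2 : Matrix.SpecialLinearGroup (Fin 2) ℂ) :
      Matrix (Fin 2) (Fin 2) ℂ) = !![1 + lam * 2, lam; 2, 1] := by
    rw [Matrix.SpecialLinearGroup.coe_mul]
    ext i j
    fin_cases i <;> fin_cases j <;>
      simp [Amat, Bmat, Matrix.SpecialLinearGroup.coe_mul, Matrix.mul_apply, Fin.sum_univ_two]
  rcases hz with ⟨u, hu, rfl⟩ | rfl
  · simp only [Set.mem_setOf_eq] at hu
    have hv : (2 : ℂ) * u + 1 ≠ 0 := by
      intro h
      have hu2 : u = -(1/2) := by linear_combination h / 2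
      rw [hu2] at hu
      rw [norm_neg] at hu
      norm_num [map_div₀, Complex.norm_two] at hu
    rw [moebius_coe, hM]
    simp only [Matrix.cons_val', Matrix.cons_val_zero, Matrix.cons_val_one, Matrix.head_cons,
      Matrix.head_fin_const, Matrix.empty_val', Matrix.cons_val_fin_one, Matrix.of_apply]
    rw [if_neg hv]
    refine ⟨_, rfl, ?_⟩
    set w := ((1 + lam * 2) * u + lam) / (2 * u + 1) with hw
    have hwval : w = lam + u / (2 * u + 1) := by
      rw [hw]; field_simp; ring
    have hre : (1:ℝ)/3 ≤ (u / (2 * u + 1)).re := by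
      have hN : 0 < Complex.normSq (2 * u + 1) := by
        simpa [Complex.normSq_eq_norm_sq] using (Complex.normSq_pos.mpr hv)
      have hdiv : (u / (2 * u + 1)).re =
          (u.re * (2*u+1).re + u.im * (2*u+1).im) / Complex.normSq (2*u+1) := by
        rw [Complex.div_re]; ring
      rw [hdiv]
      rw [le_div_iff₀ hN]
      have habs : 1 < Real.sqrt (u.re^2 + u.im^2) := by
        simpa [Complex.norm_def, Complex.normSq_apply, sq] using hu
      have h1 : 1 < u.re^2 + u.im^2 := by
        nlinarith [Real.sq_sqrt (by positivity : (0:ℝ) ≤ u.re^2 + u.im^2), habs,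
          Real.sqrt_nonneg (u.re^2 + u.im^2)]
      simp only [Complex.add_re, Complex.add_im, Complex.mul_re, Complex.mul_im,
        Complex.normSq_apply, Complex.re_ofNat, Complex.im_ofNat, Complex.one_re,
        Complex.one_im]
      nlinarith [sq_nonneg (u.re - 1), h1]
    have hre2 : (5:ℝ)/4 ≤ w.re := by
      rw [hwval]
      simp only [Complex.add_re]
      norm_num at hlam
      linarith
    exact le_trans hre2 (Complex.re_le_norm w)
  · rw [moebius_infty, hM]
    simp only [Matrix.cons_val', Matrix.cons_val_zero, Matrix.cons_val_one, Matrix.head_cons,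
      Matrix.head_fin_const, Matrix.empty_val', Matrix.cons_val_fin_one, Matrix.of_apply]
    rw [if_neg (by norm_num : (2:ℂ) ≠ 0)]
    refine ⟨_, rfl, ?_⟩
    have : (5:ℝ)/4 ≤ ((1 + lam * 2) / 2).re := by
      have : ((1 + lam * 2) / 2 : ℂ).re = (1 + lam.re * 2) / 2 := by
        rw [Complex.div_re]
        simp [Complex.normSq_apply, Complex.add_re, Complex.add_im, Complex.mul_re, Complex.mul_im]
        ring
      rw [this]
      norm_num at hlam ⊢
      linarith
    exact le_trans this (Complex.re_le_norm _)
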